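/- Let H ⊆ ℕ⁹ be the set of tuples (a, b, c, x, y, u, v, s, t) such that: a ≤ b + c, b ≤ a + c, c ≤ a + b; a + b + c is even; x + y = a; u + v = b; and s + t = c. Then H is an additive submonoid of ℕ⁹, and it is generated as a monoid by the twelve elements in which (a,b,c) is one of (1,1,0), (1,0,1), (0,1,1), and for each of the two coordinates among {a,b,c} equal to 1, exactly one element of its associated pair (x,y for a; u,v for b; s,t for c) equals 1, all other coordinates being 0. -/

import Mathlib

set_option maxHeartbeats 1000000

/-- The semigroup `H_{0,3}` of weight diagrams of the trinode.  A tuple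
`(a, b, c, x, y, u, v, s, t) ∈ ℕ⁹` (coordinates indexed `0,…,8`) lies in it iff `a, b, c`
satisfy the triangle inequalities, `a + b + c` is even, and `x + y = a`, `u + v = b`,
`s + t = c`.  It is an additive submonoid of `ℕ⁹`, generated by the twelve weight diagrams
of the Plücker generators. -/
theorem trinode_weight_monoid_generation :
    {w : Fin 9 → ℕ | w 0 ≤ w 1 + w 2 ∧ w 1 ≤ w 0 + w 2 ∧ w 2 ≤ w 0 + w 1 ∧
        Even (w 0 + w 1 + w 2) ∧ w 3 + w 4 = w 0 ∧ w 5 + w 6 = w 1 ∧ w 7 + w 8 = w 2} =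
      ((AddSubmonoid.closure
        { ![1, 1, 0, 1, 0, 1, 0, 0, 0], ![1, 1, 0, 1, 0, 0, 1, 0, 0],
          ![1, 1, 0, 0, 1, 1, 0, 0, 0], ![1, 1, 0, 0, 1, 0, 1, 0, 0],
          ![1, 0, 1, 1, 0, 0, 0, 1, 0], ![1, 0, 1, 1, 0, 0, 0, 0, 1],
          ![1, 0, 1, 0, 1, 0, 0, 1, 0], ![1, 0, 1, 0, 1, 0, 0, 0, 1],
          ![0, 1, 1, 0, 0, 1, 0, 1, 0], ![0, 1, 1, 0, 0, 1, 0, 0, 1],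
          ![0, 1, 1, 0, 0, 0, 1, 1, 0], ![0, 1, 1, 0, 0, 0, 1, 0, 1] } :
        AddSubmonoid (Fin 9 → ℕ)) : Set (Fin 9 → ℕ)) := by
  ext w
  constructor
  · rintro ⟨h1, h2, h3, h4, h5, h6, h7⟩
    obtain ⟨m, hm⟩ := h4
    obtain ⟨p, q, r, hp, hq, hr⟩ : ∃ p q r, w 0 = p + q ∧ w 1 = p + r ∧ w 2 = q + r :=
      ⟨(w 0 + w 1 - w 2) / 2, (w 0 + w 2 - w 1) / 2, (w 1 + w 2 - w 0) / 2,
        by omega, by omega, by omega⟩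
    obtain ⟨x1, x2, hxa, hxb, hxc⟩ : ∃ x1 x2, x1 + x2 = w 3 ∧ x1 ≤ p ∧ x2 ≤ q :=
      ⟨min (w 3) p, w 3 - min (w 3) p, by omega, by omega, by omega⟩
    obtain ⟨u1, u3, hua, hub, huc⟩ : ∃ u1 u3, u1 + u3 = w 5 ∧ u1 ≤ p ∧ u3 ≤ r :=
      ⟨min (w 5) p, w 5 - min (w 5) p, by omega, by omega, by omega⟩
    obtain ⟨s2, s3, hsa, hsb, hsc⟩ : ∃ s2 s3, s2 + s3 = w 7 ∧ s2 ≤ q ∧ s3 ≤ r :=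
      ⟨min (w 7) q, w 7 - min (w 7) q, by omega, by omega, by omega⟩
    obtain ⟨n1, n2, n3, n4, hna, hnb, hnc⟩ :
        ∃ n1 n2 n3 n4, n1 + n2 + n3 + n4 = p ∧ n1 + n2 = x1 ∧ n1 + n3 = u1 :=
      ⟨min x1 u1, x1 - min x1 u1, u1 - min x1 u1, p + min x1 u1 - x1 - u1,
        by omega, by omega, by omega⟩
    obtain ⟨m1, m2, m3, m4, hma, hmb, hmc⟩ :
        ∃ m1 m2 m3 m4, m1 + m2 + m3 + m4 = q ∧ m1 + m2 = x2 ∧ m1 + m3 = s2 :=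
      ⟨min x2 s2, x2 - min x2 s2, s2 - min x2 s2, q + min x2 s2 - x2 - s2,
        by omega, by omega, by omega⟩
    obtain ⟨k1, k2, k3, k4, hka, hkb, hkc⟩ :
        ∃ k1 k2 k3 k4, k1 + k2 + k3 + k4 = r ∧ k1 + k2 = u3 ∧ k1 + k3 = s3 :=
      ⟨min u3 s3, u3 - min u3 s3, s3 - min u3 s3, r + min u3 s3 - u3 - s3,
        by omega, by omega, by omega⟩
    have key : w =
        n1 • ![1, 1, 0, 1, 0, 1, 0, 0, 0] + n2 • ![1, 1, 0, 1, 0, 0, 1, 0, 0] +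
        n3 • ![1, 1, 0, 0, 1, 1, 0, 0, 0] + n4 • ![1, 1, 0, 0, 1, 0, 1, 0, 0] +
        m1 • ![1, 0, 1, 1, 0, 0, 0, 1, 0] + m2 • ![1, 0, 1, 1, 0, 0, 0, 0, 1] +
        m3 • ![1, 0, 1, 0, 1, 0, 0, 1, 0] + m4 • ![1, 0, 1, 0, 1, 0, 0, 0, 1] +
        k1 • ![0, 1, 1, 0, 0, 1, 0, 1, 0] + k2 • ![0, 1, 1, 0, 0, 1, 0, 0, 1] +
        k3 • ![0, 1, 1, 0, 0, 0, 1, 1, 0] + k4 • ![0, 1, 1, 0, 0, 0, 1, 0, 1] := by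
      have hw9 : w = ![w 0, w 1, w 2, w 3, w 4, w 5, w 6, w 7, w 8] := by
        funext i; fin_cases i <;> rfl
      rw [hw9]
      simp only [Matrix.smul_cons, smul_eq_mul, Matrix.smul_empty, Matrix.add_cons,
        Matrix.head_cons, Matrix.tail_cons, Matrix.empty_add_empty]
      simp only [Matrix.vecCons, Fin.cons_inj]
      refine ⟨by omega, by omega, by omega, by omega, by omega, by omega, by omega, by omega,
        by omega, trivial⟩
    rw [key]
    refine AddSubmonoid.add_mem _ (AddSubmonoid.add_mem _ (AddSubmonoid.add_mem _
      (AddSubmonoid.add_mem _ (AddSubmonoid.add_mem _ (AddSubmonoid.add_mem _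
      (AddSubmonoid.add_mem _ (AddSubmonoid.add_mem _ (AddSubmonoid.add_mem _
      (AddSubmonoid.add_mem _ (AddSubmonoid.add_mem _ ?_ ?_) ?_) ?_) ?_) ?_) ?_) ?_) ?_) ?_) ?_) ?_ <;>
      exact AddSubmonoid.nsmul_mem _ (AddSubmonoid.subset_closure (by simp)) _
  · intro hw
    induction hw using AddSubmonoid.closure_induction with
    | mem g hg =>
      simp only [Set.mem_insert_iff, Set.mem_singleton_iff] at hg
      rcases hg with h | h | h | h | h | h | h | h | h | h | h | h <;> subst h <;>
        decide
    | zero => exact ⟨by simp, by simp, by simp, by simp, by simp, by simp, by simp⟩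
    | add a b _ _ ha hb =>
      obtain ⟨a1, a2, a3, a4, a5, a6, a7⟩ := ha
      obtain ⟨b1, b2, b3, b4, b5, b6, b7⟩ := hb
      obtain ⟨ma, hma⟩ := a4
      obtain ⟨mb, hmb⟩ := b4
      refine ⟨?_, ?_, ?_, ⟨ma + mb, ?_⟩, ?_, ?_, ?_⟩ <;> simp only [Pi.add_apply] <;> omega
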